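/- arXiv:2110.12643 — 5 statements merged into one kernel-verified Lean document; each statement's English description precedes it below -/
import Mathlib

section
/- Let M be an n×n integer matrix with det(M) = 1 and det(M^(3)) = 1, let α be a nonzero rational, and suppose the matrix N obtained from M by multiplying row i by α and column j by α^{-1} has all integer entries. Then det(N) = 1 and det(N^(3)) = 1. -/
lemma aux_key {n : ℕ} (i j : Fin n) (c : ℚ) (hc : c ≠ 0)
    (P Q : Matrix (Fin n) (Fin n) ℤ)
    (h : (Q.map (Int.cast : ℤ → ℚ)) =
      Matrix.diagonal (fun k => if k = i then c else 1) *
        (P.map (Int.cast : ℤ → ℚ)) *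
        Matrix.diagonal (fun k => if k = j then c⁻¹ else 1))
    (hP : P.det = 1) : Q.det = 1 := by
  have hd : ((Q.det : ℚ)) = 1 := by
    have := congrArg Matrix.det h
    rw [show Q.map (Int.cast : ℤ → ℚ) = (Int.castRingHom ℚ).mapMatrix Q from rfl,
      show P.map (Int.cast : ℤ → ℚ) = (Int.castRingHom ℚ).mapMatrix P from rfl] at this
    rw [← RingHom.map_det (Int.castRingHom ℚ) Q] at this
    simp only [Matrix.det_mul, Matrix.det_diagonal,
      Finset.prod_ite_eq', Finset.mem_univ, if_true] at this
    rw [← RingHom.map_det (Int.castRingHom ℚ) P, hP] at this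
    simpa [hc, mul_comm, mul_assoc, mul_left_comm] using this
  exact_mod_cast hd

theorem stmt_7 {n : ℕ} (M : Matrix (Fin n) (Fin n) ℤ)
    (h1 : M.det = 1) (h2 : (Matrix.of fun i j => (M i j) ^ 3).det = 1)
    (i j : Fin n) (α : ℚ) (hα : α ≠ 0)
    (N : Matrix (Fin n) (Fin n) ℤ)
    (hN : (N.map (Int.cast : ℤ → ℚ)) =
      Matrix.diagonal (fun k => if k = i then α else 1) *
        (M.map (Int.cast : ℤ → ℚ)) *
        Matrix.diagonal (fun k => if k = j then α⁻¹ else 1)) :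
    N.det = 1 ∧ (Matrix.of fun a b => (N a b) ^ 3).det = 1 := by
  constructor
  · exact aux_key i j α hα M N hN h1
  · apply aux_key i j (α ^ 3) (pow_ne_zero 3 hα)
      (Matrix.of fun a b => (M a b) ^ 3) (Matrix.of fun a b => (N a b) ^ 3) _ h2
    ext a b
    have h : (N a b : ℚ) = (if a = i then α else 1) * (M a b : ℚ) *
        (if b = j then α⁻¹ else 1) := by
      have := congrFun (congrFun hN a) b
      rwa [Matrix.map_apply, Matrix.mul_diagonal, Matrix.diagonal_mul,
        Matrix.map_apply] at this
    rw [Matrix.map_apply, Matrix.mul_diagonal, Matrix.diagonal_mul,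
      Matrix.map_apply, Matrix.of_apply, Matrix.of_apply]
    push_cast
    rw [h]
    by_cases hai : a = i <;> by_cases hbj : b = j <;> simp [hai, hbj] <;> ring
end

section
/- For every integer t, the matrix A(t) with rows ((16t+1)(2592t^2+288t+7), (18t+1)(24t+1)(144t+11), 2), ((12t+1)(5184t^2+540t+13), (72t+5)(1296t^2+153t+4), 3), (2, 3, 0) satisfies det(A(t)) = 1. -/
theorem stmt_8 (t : ℤ) :
    Matrix.det !![(16*t+1)*(2592*t^2+288*t+7), (18*t+1)*(24*t+1)*(144*t+11), 2;
      (12*t+1)*(5184*t^2+540*t+13), (72*t+5)*(1296*t^2+153*t+4), 3;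
      2, 3, 0] = 1 := by
  simp [Matrix.det_fin_three]; ring
end

section
/- For every integer t, the matrix A(t) with rows ((16t+1)(2592t^2+288t+7), (18t+1)(24t+1)(144t+11), 2), ((12t+1)(5184t^2+540t+13), (72t+5)(1296t^2+153t+4), 3), (2, 3, 0) satisfies det(A(t)^(3)) = 1, where A(t)^(3) is the matrix obtained by cubing each entry of A(t). -/
theorem stmt_9 (t : ℤ) :
    Matrix.det (Matrix.of fun i j =>
      ((!![(16*t+1)*(2592*t^2+288*t+7), (18*t+1)*(24*t+1)*(144*t+11), 2;
        (12*t+1)*(5184*t^2+540*t+13), (72*t+5)*(1296*t^2+153*t+4), 3;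
        2, 3, 0]) i j) ^ 3) = 1 := by
  rw [Matrix.det_fin_three]
  simp [Matrix.of_apply]
  ring
end

section
/- For every integer t, none of the entries of the matrix A(t) with rows ((16t+1)(2592t^2+288t+7), (18t+1)(24t+1)(144t+11), 2), ((12t+1)(5184t^2+540t+13), (72t+5)(1296t^2+153t+4), 3), (2, 3, 0) equals 1 or -1. -/
lemma aux_ne (n : ℕ) [NeZero n] (f : ℤ → ℤ) (g : ZMod n → ZMod n)
    (hcomm : ∀ t : ℤ, ((f t : ZMod n)) = g (t : ZMod n))
    (h1 : ∀ x : ZMod n, g x ≠ 1) (h2 : ∀ x : ZMod n, g x ≠ -1)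
    (t : ℤ) : f t ≠ 1 ∧ f t ≠ -1 := by
  constructor <;> intro h
  · have := congrArg (fun z : ℤ => (z : ZMod n)) h
    simp only [hcomm, Int.cast_one] at this
    exact h1 _ this
  · have := congrArg (fun z : ℤ => (z : ZMod n)) h
    simp only [hcomm] at this
    push_cast at this
    exact h2 _ this

lemma h11 (t : ℤ) : (16*t+1)*(2592*t^2+288*t+7) ≠ 1 ∧ (16*t+1)*(2592*t^2+288*t+7) ≠ -1 :=
  aux_ne 11 (fun t => (16*t+1)*(2592*t^2+288*t+7)) (fun x => (16*x+1)*(2592*x^2+288*x+7))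
    (by intro t; push_cast; ring) (by decide) (by decide) t

lemma h12 (t : ℤ) : (18*t+1)*(24*t+1)*(144*t+11) ≠ 1 ∧ (18*t+1)*(24*t+1)*(144*t+11) ≠ -1 :=
  aux_ne 15 (fun t => (18*t+1)*(24*t+1)*(144*t+11)) (fun x => (18*x+1)*(24*x+1)*(144*x+11))
    (by intro t; push_cast; ring) (by decide) (by decide) t

lemma h21 (t : ℤ) : (12*t+1)*(5184*t^2+540*t+13) ≠ 1 ∧ (12*t+1)*(5184*t^2+540*t+13) ≠ -1 :=
  aux_ne 8 (fun t => (12*t+1)*(5184*t^2+540*t+13)) (fun x => (12*x+1)*(5184*x^2+540*x+13))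
    (by intro t; push_cast; ring) (by decide) (by decide) t

lemma h22 (t : ℤ) : (72*t+5)*(1296*t^2+153*t+4) ≠ 1 ∧ (72*t+5)*(1296*t^2+153*t+4) ≠ -1 :=
  aux_ne 9 (fun t => (72*t+5)*(1296*t^2+153*t+4)) (fun x => (72*x+5)*(1296*x^2+153*x+4))
    (by intro t; push_cast; ring) (by decide) (by decide) t

theorem stmt_10 (t : ℤ) (i j : Fin 3) :
    (!![(16*t+1)*(2592*t^2+288*t+7), (18*t+1)*(24*t+1)*(144*t+11), 2;
      (12*t+1)*(5184*t^2+540*t+13), (72*t+5)*(1296*t^2+153*t+4), 3;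
      2, 3, 0]) i j ≠ 1 ∧
    (!![(16*t+1)*(2592*t^2+288*t+7), (18*t+1)*(24*t+1)*(144*t+11), 2;
      (12*t+1)*(5184*t^2+540*t+13), (72*t+5)*(1296*t^2+153*t+4), 3;
      2, 3, 0]) i j ≠ -1 := by
  fin_cases i <;> fin_cases j <;>
    simp [Matrix.cons_val_zero, Matrix.cons_val_one] <;>
    first
      | exact h11 t | exact h12 t | exact h21 t | exact h22 t
      | exact (h11 t).1 | exact (h12 t).1 | exact (h21 t).1 | exact (h22 t).1
      | omega
end

section
/- Let x1, ..., x5 be integers with x1+x2+x3+x4+x5 = 0 and x1^3+...+x5^3 = 0. Then the matrix B with rows (x2, −x3, 1), (−x4, x5, 1), (1, 1, 0) satisfies det(B) = x1 and det(B^(3)) = x1^3. -/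
theorem stmt_14 (x1 x2 x3 x4 x5 : ℤ)
    (h1 : x1 + x2 + x3 + x4 + x5 = 0)
    (h2 : x1^3 + x2^3 + x3^3 + x4^3 + x5^3 = 0) :
    Matrix.det !![x2, -x3, 1; -x4, x5, 1; 1, 1, 0] = x1 ∧
    Matrix.det (Matrix.of fun i j =>
      ((!![x2, -x3, 1; -x4, x5, 1; 1, 1, 0]) i j) ^ 3) = x1^3 := by
  constructor <;>
  · rw [Matrix.det_fin_three]
    simp [Matrix.cons_val_zero, Matrix.cons_val_one]
    linarith
end
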